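/- Let $Y$ have density $f(y) = f_0(y - d)$ where $f_0$ is symmetric ($f_0(-y) = f_0(y)$), positive, and $d > 0$, and define $g(u) = \frac{f((F^+)^{-1}(u))}{f((F^+)^{-1}(u)) + f(-(F^+)^{-1}(u))}$ where $F^+(y) = P(|Y| \le y)$ for $y > 0$. If $f_0(y) = C e^{-\lambda y^2}$ (Gaussian tail with $\lambda > 0$), then $\lim_{u \to 1} g(u) = 1$. -/
import Mathlib


open Filter

/-- For a Gaussian-tailed shifted density `f(y) = f₀(y-d)`, `f₀(y) = C e^{-λy²}`,
`λ > 0`, `d > 0`, the function `g(u) = f(y)/(f(y) + f(-y))` at `y = (F⁺)⁻¹(u)`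
tends to `1` as `u → 1`, since `(F⁺)⁻¹(u) → ∞`. -/
theorem g_limit_gaussian_tail (C lam d : ℝ) (hC : 0 < C) (hlam : 0 < lam) (hd : 0 < d)
    (f₀ : ℝ → ℝ) (hf₀ : ∀ y, f₀ y = C * Real.exp (-lam * y ^ 2))
    (G : ℝ → ℝ) (hG : Tendsto G (nhdsWithin 1 (Set.Iio 1)) atTop) :
    Tendsto (fun u => f₀ (G u - d) / (f₀ (G u - d) + f₀ (-(G u) - d)))
      (nhdsWithin 1 (Set.Iio 1)) (nhds 1) := by
  have key : ∀ y : ℝ, f₀ (y - d) / (f₀ (y - d) + f₀ (-y - d))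
      = 1 / (1 + Real.exp (-(4 * lam * d) * y)) := by
    intro y
    rw [hf₀, hf₀]
    have h1 : (0:ℝ) < C * Real.exp (-lam * (y - d) ^ 2) :=
      mul_pos hC (Real.exp_pos _)
    rw [div_eq_div_iff]
    · ring_nf
      congr 1
      rw [mul_assoc, ← Real.exp_add]
      ring_nf
    · positivity
    · positivity
  simp only [key]
  have h2 : Tendsto (fun u => Real.exp (-(4 * lam * d) * G u))
      (nhdsWithin 1 (Set.Iio 1)) (nhds 0) := by
    apply Real.tendsto_exp_atBot.comp
    apply Tendsto.comp (tendsto_id.const_mul_atTop_of_neg (by nlinarith)) hG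
  have h3 : Tendsto (fun u => (1:ℝ) + Real.exp (-(4 * lam * d) * G u))
      (nhdsWithin 1 (Set.Iio 1)) (nhds (1 + 0)) := tendsto_const_nhds.add h2
  have := h3.inv₀ (by norm_num)
  simpa [one_div] using this
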